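/- Under the HO-GSVD assumptions (A stacked full column rank, π > 0), if Z is an orthonormal matrix diagonalizing T_π and R is the invertible factor from the thin QR factorization of A, then V := RᵀZ is invertible and diagonalizes S_π: V^{-1} S_π V is diagonal, with eigenvalues ς = ((1+πN)τ − 1)/(N−1) where τ ranges over the eigenvalues of T_π. -/

import Mathlib

open Matrix BigOperators Finset

theorem stmt11 {N n : ℕ} (hN : 2 ≤ N) {m : Fin N → ℕ}
    (Q : ∀ i, Matrix (Fin (m i)) (Fin n) ℝ)
    (hQ : ∑ i, (Q i)ᵀ * Q i = 1)
    (p : ℝ) (hp : 0 < p)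
    (R : Matrix (Fin n) (Fin n) ℝ) (hR : IsUnit R.det)
    (A : ∀ i, Matrix (Fin (m i)) (Fin n) ℝ) (hA : ∀ i, A i = Q i * R)
    (D : Fin N → Matrix (Fin n) (Fin n) ℝ)
    (hD : ∀ i, D i = (A i)ᵀ * A i + p • (Rᵀ * R))
    (S T : Matrix (Fin n) (Fin n) ℝ)
    (hS : S = ((N : ℝ) * ((N : ℝ) - 1))⁻¹ •
      ∑ i, ∑ j ∈ Finset.Ioi i, (D i * (D j)⁻¹ + D j * (D i)⁻¹))
    (hT : T = (N : ℝ)⁻¹ •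
      ∑ i, ((Q i)ᵀ * Q i + p • (1 : Matrix (Fin n) (Fin n) ℝ))⁻¹)
    (Z : Matrix (Fin n) (Fin n) ℝ) (hZ : Zᵀ * Z = 1)
    (hdiag : (Zᵀ * T * Z).IsDiag) :
    IsUnit (Rᵀ * Z).det ∧ ((Rᵀ * Z)⁻¹ * S * (Rᵀ * Z)).IsDiag ∧
      ∀ k, ((Rᵀ * Z)⁻¹ * S * (Rᵀ * Z)) k k =
        ((1 + p * N) * (Zᵀ * T * Z) k k - 1) / ((N : ℝ) - 1) := by
  -- basic numeric facts
  have hN0 : (N : ℝ) ≠ 0 := by positivity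
  have hN2 : (2 : ℝ) ≤ (N : ℝ) := by exact_mod_cast hN
  have hN1 : (N : ℝ) - 1 ≠ 0 := by nlinarith
  -- the matrices B i
  set B : Fin N → Matrix (Fin n) (Fin n) ℝ :=
    fun i => (Q i)ᵀ * Q i + p • (1 : Matrix (Fin n) (Fin n) ℝ) with hB
  have hBpd : ∀ i, (B i).PosDef := by
    intro i
    have h1 : ((Q i)ᵀ * Q i).PosSemidef := by
      have := Matrix.posSemidef_conjTranspose_mul_self (Q i)
      simpa [Matrix.conjTranspose_eq_transpose_of_trivial] using this
    have h2 : (p • (1 : Matrix (Fin n) (Fin n) ℝ)).PosDef := by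
      have : (p • (1 : Matrix (Fin n) (Fin n) ℝ)) = Matrix.diagonal (fun _ => p) := by
        simp [← Matrix.diagonal_one, ← Matrix.diagonal_smul]
      rw [this]
      exact Matrix.PosDef.diagonal (fun _ => hp)
    exact Matrix.PosDef.posSemidef_add h1 h2
  have hBu : ∀ i, IsUnit (B i).det := fun i => (Matrix.isUnit_iff_isUnit_det _).mp (hBpd i).isUnit
  have hRTu : IsUnit (Rᵀ).det := by rwa [Matrix.det_transpose]
  -- D i in terms of B i
  have hDi : ∀ i, D i = Rᵀ * B i * R := by
    intro i
    rw [hD i, hA i, hB]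
    simp only [Matrix.transpose_mul, Matrix.mul_add, Matrix.add_mul, Matrix.mul_smul,
      Matrix.smul_mul, Matrix.mul_one, Matrix.one_mul, Matrix.mul_assoc]
  have hDinv : ∀ i, (D i)⁻¹ = R⁻¹ * ((B i)⁻¹ * (Rᵀ)⁻¹) := by
    intro i
    rw [hDi i, Matrix.mul_inv_rev, Matrix.mul_inv_rev]
  have key : ∀ i j, D i * (D j)⁻¹ = Rᵀ * (B i * (B j)⁻¹) * (Rᵀ)⁻¹ := by
    intro i j
    rw [hDi i, hDinv j]
    rw [Matrix.mul_assoc (Rᵀ * B i) R, Matrix.mul_nonsing_inv_cancel_left R _ hR,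
      Matrix.mul_assoc, Matrix.mul_assoc, Matrix.mul_assoc]
  -- the B-sum M
  set M : Matrix (Fin n) (Fin n) ℝ :=
    ∑ i, ∑ j ∈ Finset.Ioi i, (B i * (B j)⁻¹ + B j * (B i)⁻¹) with hM
  have hSsum : (∑ i, ∑ j ∈ Finset.Ioi i, (D i * (D j)⁻¹ + D j * (D i)⁻¹))
      = Rᵀ * M * (Rᵀ)⁻¹ := by
    rw [hM, Matrix.mul_sum, Finset.sum_mul]
    refine Finset.sum_congr rfl (fun i _ => ?_)
    rw [Matrix.mul_sum, Finset.sum_mul]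
    refine Finset.sum_congr rfl (fun j _ => ?_)
    rw [key i j, key j i, ← Matrix.add_mul, ← Matrix.mul_add]
  -- sum of B i
  have hsumB : (∑ i, B i) = (1 + p * N) • (1 : Matrix (Fin n) (Fin n) ℝ) := by
    rw [hB]
    rw [Finset.sum_add_distrib, hQ, Finset.sum_const, Finset.card_univ, Fintype.card_fin]
    rw [add_smul, one_smul]
    congr 1
    rw [← Nat.cast_smul_eq_nsmul ℝ, smul_smul, mul_comm (N : ℝ) p]
  -- sum of inverses
  have hsumBinv : (∑ i, (B i)⁻¹) = (N : ℝ) • T := by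
    rw [hT, smul_smul, mul_inv_cancel₀ hN0, one_smul]
  -- evaluate M
  have hMval : M = (((1 + p * N) * N) • T) - (N : ℝ) • 1 := by
    have hswap : M = ∑ i, (∑ j ∈ Finset.Ioi i, B j * (B i)⁻¹
        + ∑ j ∈ Finset.Iio i, B j * (B i)⁻¹) := by
      rw [hM]
      simp_rw [Finset.sum_add_distrib]
      rw [add_comm]
      congr 1
      exact Finset.sum_comm' (by simp) |>.trans rfl
    have hstep : ∀ i : Fin N, ∑ j ∈ Finset.Ioi i, B j * (B i)⁻¹
        + ∑ j ∈ Finset.Iio i, B j * (B i)⁻¹ = (∑ j, B j) * (B i)⁻¹ - 1 := by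
      intro i
      have hdisj : Disjoint (Finset.Ioi i) (Finset.Iio i) :=
        Finset.disjoint_left.mpr fun j hj hj' =>
          absurd (Finset.mem_Ioi.mp hj) (lt_asymm (Finset.mem_Iio.mp hj'))
      have hset : Finset.Ioi i ∪ Finset.Iio i = Finset.univ.erase i := by
        ext j
        simp only [Finset.mem_union, Finset.mem_Ioi, Finset.mem_Iio, Finset.mem_erase,
          Finset.mem_univ, and_true]
        exact (ne_iff_lt_or_gt (a := i) (b := j)).symm.trans ne_comm
      rw [← Finset.sum_union hdisj, hset, eq_sub_iff_add_eq, add_comm,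
        ← Matrix.mul_nonsing_inv (B i) (hBu i),
        Finset.add_sum_erase _ (fun j => B j * (B i)⁻¹) (Finset.mem_univ i),
        ← Finset.sum_mul]
    rw [hswap, Finset.sum_congr rfl fun i _ => hstep i]
    rw [Finset.sum_sub_distrib, ← Matrix.mul_sum, hsumB, hsumBinv, Finset.sum_const,
      Finset.card_univ, Fintype.card_fin, Matrix.smul_mul, Matrix.one_mul, smul_smul,
      ← Nat.cast_smul_eq_nsmul ℝ]
  -- invertibility of Z and V
  have hZdet : IsUnit Z.det := by
    have h := congrArg Matrix.det hZ
    rw [Matrix.det_mul, Matrix.det_transpose, Matrix.det_one] at h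
    exact isUnit_iff_exists_inv.mpr ⟨_, h⟩
  have hVdet : IsUnit (Rᵀ * Z).det := by
    rw [Matrix.det_mul, Matrix.det_transpose]
    exact hR.mul hZdet
  have hZinv : Z⁻¹ = Zᵀ := Matrix.inv_eq_left_inv hZ
  -- compute the conjugation
  have hE : (Rᵀ * Z)⁻¹ * S * (Rᵀ * Z)
      = ((N : ℝ) * ((N : ℝ) - 1))⁻¹ •
        ((((1 + p * N) * N) • (Zᵀ * T * Z)) - (N : ℝ) • 1) := by
    rw [hS, hSsum, Matrix.mul_inv_rev, hZinv]
    rw [Matrix.mul_smul, Matrix.smul_mul]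
    congr 1
    have h1 : Zᵀ * (Rᵀ)⁻¹ * (Rᵀ * M * (Rᵀ)⁻¹) * (Rᵀ * Z) = Zᵀ * M * Z := by
      simp only [Matrix.mul_assoc]
      rw [Matrix.nonsing_inv_mul_cancel_left _ _ hRTu,
        Matrix.nonsing_inv_mul_cancel_left _ _ hRTu]
    rw [h1, hMval]
    simp only [Matrix.mul_sub, Matrix.sub_mul, Matrix.mul_smul, Matrix.smul_mul,
      Matrix.mul_one, Matrix.mul_assoc]
    rw [hZ]
  refine ⟨hVdet, ?_, ?_⟩
  · intro i j hij
    rw [hE]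
    have h0 : (Zᵀ * T * Z) i j = 0 := hdiag hij
    simp [Matrix.sub_apply, Matrix.smul_apply, Matrix.one_apply_ne hij, h0]
  · intro k
    rw [hE]
    have h1 : ((1 : Matrix (Fin n) (Fin n) ℝ)) k k = 1 := Matrix.one_apply_eq k
    simp only [Matrix.smul_apply, Matrix.sub_apply, h1, smul_eq_mul]
    field_simp
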